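/- Let φ be a finite point set in ℝ^d contained in Q_n = [−n/2, n/2]^d, let Q_{z,m} = z + Q_m ⊆ ℝ^d, and suppose φ ⊄ Q_{z,m} and φ ∩ Q_{z,m} ≠ ∅. Let K ≥ m be minimal with φ ∩ Q_{z,K} ⊄ Q_{z,m} (assuming it exists). Then the MST total edge length satisfies H(φ) ≤ H(φ \ Q_{z,m}) + √d · K · #(φ ∩ Q_{z,m}). -/
import Mathlib

open Metric
open scoped Classical

/-- The length of an edge, as a function on unordered pairs. -/
noncomputable def edgeLength {d : ℕ} (e : Sym2 (EuclideanSpace ℝ (Fin d))) : ℝ :=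
  Sym2.lift ⟨fun a b => dist a b, fun a b => dist_comm a b⟩ e

/-- The total edge length of a minimal spanning tree on the finite point set `ψ`. -/
noncomputable def mstLength {d : ℕ} (ψ : Finset (EuclideanSpace ℝ (Fin d))) : ℝ :=
  sInf {L : ℝ | ∃ E : Finset (Sym2 (EuclideanSpace ℝ (Fin d))),
    (∀ e ∈ E, ∀ x, x ∈ e → x ∈ ψ) ∧
    (∀ x ∈ ψ, ∀ y ∈ ψ,
      (SimpleGraph.fromEdgeSet (E : Set (Sym2 (EuclideanSpace ℝ (Fin d))))).Reachable x y) ∧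
    E.card = ψ.card - 1 ∧
    L = ∑ e ∈ E, edgeLength e}

/-- The cube `Q_{z,m} = z + [−m/2, m/2]^d`. -/
def cube {d : ℕ} (m : ℝ) (z : EuclideanSpace ℝ (Fin d)) : Set (EuclideanSpace ℝ (Fin d)) :=
  {x | ∀ i, |x i - z i| ≤ m / 2}

lemma edgeLength_mk {d : ℕ} (a b : EuclideanSpace ℝ (Fin d)) :
    edgeLength s(a,b) = dist a b := rfl

lemma edgeLength_nonneg {d : ℕ} (e : Sym2 (EuclideanSpace ℝ (Fin d))) :
    0 ≤ edgeLength e := by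
  refine Sym2.inductionOn e fun a b => ?_
  rw [edgeLength_mk]
  exact dist_nonneg

lemma dist_le_of_mem_cube {d : ℕ} (K : ℝ) (hK : 0 ≤ K) (z x y : EuclideanSpace ℝ (Fin d))
    (hx : x ∈ cube K z) (hy : y ∈ cube K z) : dist x y ≤ Real.sqrt d * K := by
  rw [EuclideanSpace.dist_eq]
  have h : ∀ i, dist (x i) (y i) ^ 2 ≤ K ^ 2 := by
    intro i
    have habs : |x i - y i| ≤ K := by
      have h1 := hx i
      have h2 := hy i
      calc |x i - y i| = |(x i - z i) - (y i - z i)| := by ring_nf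
        _ ≤ |x i - z i| + |y i - z i| := abs_sub _ _
        _ ≤ K/2 + K/2 := add_le_add h1 h2
        _ = K := by ring
    rw [Real.dist_eq]
    exact pow_le_pow_left₀ (abs_nonneg _) habs 2
  calc Real.sqrt (∑ i, dist (x i) (y i) ^ 2) ≤ Real.sqrt (∑ _i : Fin d, K ^ 2) :=
        Real.sqrt_le_sqrt (Finset.sum_le_sum fun i _ => h i)
    _ = Real.sqrt (d * K ^ 2) := by rw [Finset.sum_const]; simp [nsmul_eq_mul]
    _ = Real.sqrt d * K := by
        rw [Real.sqrt_mul (by positivity), Real.sqrt_sq hK]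

lemma sym2_injective {d : ℕ} (x0 : EuclideanSpace ℝ (Fin d)) :
    Function.Injective (fun p : EuclideanSpace ℝ (Fin d) => s(x0, p)) := by
  intro p q h
  rcases Sym2.eq_iff.mp h with ⟨_, h2⟩ | ⟨h1, h2⟩
  · exact h2
  · exact h2.trans h1

lemma treeSet_nonempty {d : ℕ} (ψ : Finset (EuclideanSpace ℝ (Fin d))) :
    {L : ℝ | ∃ E : Finset (Sym2 (EuclideanSpace ℝ (Fin d))),
    (∀ e ∈ E, ∀ x, x ∈ e → x ∈ ψ) ∧
    (∀ x ∈ ψ, ∀ y ∈ ψ,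
      (SimpleGraph.fromEdgeSet (E : Set (Sym2 (EuclideanSpace ℝ (Fin d))))).Reachable x y) ∧
    E.card = ψ.card - 1 ∧
    L = ∑ e ∈ E, edgeLength e}.Nonempty := by
  rcases ψ.eq_empty_or_nonempty with rfl | ⟨x0, hx0⟩
  · exact ⟨0, ∅, by simp⟩
  · set E : Finset (Sym2 (EuclideanSpace ℝ (Fin d))) :=
      (ψ.erase x0).image (fun p => s(x0, p)) with hE
    refine ⟨∑ e ∈ E, edgeLength e, E, ?_, ?_, ?_, rfl⟩
    · intro e he x hx
      rw [hE, Finset.mem_image] at he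
      obtain ⟨p, hp, rfl⟩ := he
      rcases Sym2.mem_iff.mp hx with rfl | rfl
      · exact hx0
      · exact Finset.mem_of_mem_erase hp
    · have key : ∀ x ∈ ψ,
        (SimpleGraph.fromEdgeSet (E : Set (Sym2 (EuclideanSpace ℝ (Fin d))))).Reachable x x0 := by
        intro x hx
        by_cases hxx : x = x0
        · subst hxx; exact SimpleGraph.Reachable.refl x
        · have hadj : (SimpleGraph.fromEdgeSet
              (E : Set (Sym2 (EuclideanSpace ℝ (Fin d))))).Adj x0 x := by
            refine ⟨Finset.mem_coe.mpr ?_, fun h => hxx h.symm⟩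
            rw [hE, Finset.mem_image]
            exact ⟨x, Finset.mem_erase.mpr ⟨hxx, hx⟩, rfl⟩
          exact hadj.symm.reachable
      intro x hx y hy
      exact (key x hx).trans (key y hy).symm
    · rw [hE, Finset.card_image_of_injective _ (sym2_injective x0),
        Finset.card_erase_of_mem hx0]

/-- Upper bound for the MST length after reinserting the points of a cube: if
`φ ⊆ Q_n`, `φ ⊄ Q_{z,m}`, `φ ∩ Q_{z,m} ≠ ∅` and `K ≥ m` is minimal with
`φ ∩ Q_{z,K} ⊄ Q_{z,m}`, then
`H(φ) ≤ H(φ \ Q_{z,m}) + √d · K · #(φ ∩ Q_{z,m})`. -/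
theorem mst_insertion_bound {d : ℕ} (n m K : ℕ)
    (z : EuclideanSpace ℝ (Fin d))
    (φ ψin ψout : Finset (EuclideanSpace ℝ (Fin d)))
    (hφn : ∀ x ∈ φ, x ∈ cube (n : ℝ) (0 : EuclideanSpace ℝ (Fin d)))
    (hin : ∀ x, x ∈ ψin ↔ x ∈ φ ∧ x ∈ cube (m : ℝ) z)
    (hout : ∀ x, x ∈ ψout ↔ x ∈ φ ∧ x ∉ cube (m : ℝ) z)
    (hnotsub : ∃ x ∈ φ, x ∉ cube (m : ℝ) z)
    (hne : ∃ x ∈ φ, x ∈ cube (m : ℝ) z)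
    (hmK : m ≤ K)
    (hwit : ∃ x ∈ φ, x ∈ cube (K : ℝ) z ∧ x ∉ cube (m : ℝ) z)
    (hmin : ∀ k : ℕ, m ≤ k → k < K → ∀ x ∈ φ, x ∈ cube (k : ℝ) z → x ∈ cube (m : ℝ) z) :
    mstLength φ ≤ mstLength ψout + Real.sqrt d * K * ψin.card := by
  obtain ⟨x0, hx0φ, hx0K, hx0m⟩ := hwit
  have hx0out : x0 ∈ ψout := (hout x0).mpr ⟨hx0φ, hx0m⟩
  set C := Real.sqrt d * (K : ℝ) * (ψin.card : ℝ) with hCdef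
  have hdisj : Disjoint ψin ψout := by
    rw [Finset.disjoint_left]
    intro a ha hb
    exact ((hout a).mp hb).2 ((hin a).mp ha).2
  have hunion : ψin ∪ ψout = φ := by
    ext a
    simp only [Finset.mem_union, hin a, hout a]
    constructor
    · rintro (⟨h, _⟩ | ⟨h, _⟩) <;> exact h
    · intro h
      by_cases hc : a ∈ cube (m : ℝ) z
      · exact Or.inl ⟨h, hc⟩
      · exact Or.inr ⟨h, hc⟩
  have hcard : ψin.card + ψout.card = φ.card := by
    rw [← Finset.card_union_of_disjoint hdisj, hunion]
  have hout1 : 1 ≤ ψout.card := Finset.card_pos.mpr ⟨x0, hx0out⟩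
  -- points of ψin are in the K-cube
  have hincube : ∀ p ∈ ψin, p ∈ cube (K : ℝ) z := by
    intro p hp i
    have h1 := ((hin p).mp hp).2 i
    have hmk : (m : ℝ) ≤ (K : ℝ) := Nat.cast_le.mpr hmK
    linarith
  have hbdd : BddBelow {L : ℝ | ∃ E : Finset (Sym2 (EuclideanSpace ℝ (Fin d))),
      (∀ e ∈ E, ∀ x, x ∈ e → x ∈ φ) ∧
      (∀ x ∈ φ, ∀ y ∈ φ,
        (SimpleGraph.fromEdgeSet (E : Set (Sym2 (EuclideanSpace ℝ (Fin d))))).Reachable x y) ∧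
      E.card = φ.card - 1 ∧
      L = ∑ e ∈ E, edgeLength e} := by
    refine ⟨0, fun L hL => ?_⟩
    obtain ⟨E, _, _, _, rfl⟩ := hL
    exact Finset.sum_nonneg fun e _ => edgeLength_nonneg e
  have key : ∀ L ∈ {L : ℝ | ∃ E : Finset (Sym2 (EuclideanSpace ℝ (Fin d))),
      (∀ e ∈ E, ∀ x, x ∈ e → x ∈ ψout) ∧
      (∀ x ∈ ψout, ∀ y ∈ ψout,
        (SimpleGraph.fromEdgeSet (E : Set (Sym2 (EuclideanSpace ℝ (Fin d))))).Reachable x y) ∧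
      E.card = ψout.card - 1 ∧
      L = ∑ e ∈ E, edgeLength e}, mstLength φ ≤ L + C := by
    rintro L ⟨Eo, hEpts, hEconn, hEcard, rfl⟩
    set star := ψin.image (fun p => s(x0, p)) with hstar
    have hdstar : Disjoint Eo star := by
      rw [Finset.disjoint_right]
      intro e he
      rw [hstar, Finset.mem_image] at he
      obtain ⟨p, hp, rfl⟩ := he
      intro heEo
      have hpout : p ∈ ψout := hEpts _ heEo p (Sym2.mem_mk_right x0 p)
      exact ((hout p).mp hpout).2 ((hin p).mp hp).2
    have hstarcard : star.card = ψin.card :=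
      Finset.card_image_of_injective _ (sym2_injective x0)
    -- the combined edge set is a spanning tree of φ
    have hmem : (∑ e ∈ Eo ∪ star, edgeLength e) ∈
        {L : ℝ | ∃ E : Finset (Sym2 (EuclideanSpace ℝ (Fin d))),
        (∀ e ∈ E, ∀ x, x ∈ e → x ∈ φ) ∧
        (∀ x ∈ φ, ∀ y ∈ φ,
          (SimpleGraph.fromEdgeSet (E : Set (Sym2 (EuclideanSpace ℝ (Fin d))))).Reachable x y) ∧
        E.card = φ.card - 1 ∧
        L = ∑ e ∈ E, edgeLength e} := by
      refine ⟨Eo ∪ star, ?_, ?_, ?_, rfl⟩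
      · intro e he x hx
        rcases Finset.mem_union.mp he with he | he
        · exact ((hout x).mp (hEpts e he x hx)).1
        · rw [hstar, Finset.mem_image] at he
          obtain ⟨p, hp, rfl⟩ := he
          rcases Sym2.mem_iff.mp hx with rfl | rfl
          · exact hx0φ
          · exact ((hin _).mp hp).1
      · have hreach0 : ∀ x ∈ φ,
          (SimpleGraph.fromEdgeSet
            ((Eo ∪ star : Finset _) : Set (Sym2 (EuclideanSpace ℝ (Fin d))))).Reachable x x0 := by
          intro x hx
          by_cases hc : x ∈ cube (m : ℝ) z
          · -- x ∈ ψin : directly adjacent to x0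
            have hxin : x ∈ ψin := (hin x).mpr ⟨hx, hc⟩
            have hadj : (SimpleGraph.fromEdgeSet
                ((Eo ∪ star : Finset _) : Set (Sym2 (EuclideanSpace ℝ (Fin d))))).Adj x0 x := by
              refine ⟨Finset.mem_coe.mpr ?_, fun h => hx0m (h ▸ hc)⟩
              refine Finset.mem_union_right _ ?_
              rw [hstar, Finset.mem_image]
              exact ⟨x, hxin, rfl⟩
            exact hadj.symm.reachable
          · -- x ∈ ψout : reachable inside Eo
            have hxout : x ∈ ψout := (hout x).mpr ⟨hx, hc⟩
            have hle : SimpleGraph.fromEdgeSet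
                ((Eo : Finset _) : Set (Sym2 (EuclideanSpace ℝ (Fin d)))) ≤
                SimpleGraph.fromEdgeSet
                ((Eo ∪ star : Finset _) : Set (Sym2 (EuclideanSpace ℝ (Fin d)))) :=
              SimpleGraph.fromEdgeSet_mono
                (Finset.coe_subset.mpr (Finset.subset_union_left))
            exact (hEconn x hxout x0 hx0out).mono hle
        intro x hx y hy
        exact (hreach0 x hx).trans (hreach0 y hy).symm
      · rw [Finset.card_union_of_disjoint hdstar, hEcard, hstarcard]
        omega
    -- bound the sum
    have hsum : (∑ e ∈ Eo ∪ star, edgeLength e) ≤ (∑ e ∈ Eo, edgeLength e) + C := by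
      rw [Finset.sum_union hdstar]
      have hstarsum : (∑ e ∈ star, edgeLength e) ≤ C := by
        rw [hstar, Finset.sum_image (fun p _ q _ h => sym2_injective x0 h)]
        have hterm : ∀ p ∈ ψin, edgeLength s(x0, p) ≤ Real.sqrt d * (K : ℝ) := by
          intro p hp
          rw [edgeLength_mk]
          exact dist_le_of_mem_cube (K : ℝ) (Nat.cast_nonneg K) z x0 p hx0K (hincube p hp)
        calc (∑ p ∈ ψin, edgeLength s(x0, p)) ≤ ∑ _p ∈ ψin, Real.sqrt d * (K : ℝ) :=
              Finset.sum_le_sum hterm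
          _ = (ψin.card : ℝ) * (Real.sqrt d * (K : ℝ)) := by
              rw [Finset.sum_const, nsmul_eq_mul]
          _ = C := by rw [hCdef]; ring
      linarith
    calc mstLength φ ≤ ∑ e ∈ Eo ∪ star, edgeLength e := csInf_le hbdd hmem
      _ ≤ (∑ e ∈ Eo, edgeLength e) + C := hsum
  have h2 : mstLength φ - C ≤ mstLength ψout := by
    refine le_csInf (treeSet_nonempty ψout) fun L hL => ?_
    have := key L hL
    linarith
  linarith
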